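/- Let E and F be nonempty closed convex sets in ℝⁿ such that E + F = ℝⁿ and for every u ∈ ℝⁿ the metric projections p_E(u) and p_F(u) are orthogonal, i.e., p_E(u) · p_F(u) = 0. Then E ⊆ F° and F ⊆ E°. -/
import Mathlib


open RealInnerProductSpace Pointwise

/-- The (negative) polar set of `X`. -/
def polarSet {n : ℕ} (X : Set (EuclideanSpace ℝ (Fin n))) : Set (EuclideanSpace ℝ (Fin n)) :=
  {x | ∀ e ∈ X, ⟪x, e⟫ ≤ 0}

/-- The orthogonal complement of a set `X`. -/
def orthComp {n : ℕ} (X : Set (EuclideanSpace ℝ (Fin n))) : Set (EuclideanSpace ℝ (Fin n)) :=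
  {x | ∀ u ∈ X, ⟪x, u⟫ = 0}

/-- `y` is the metric projection of `u` on `E`: it belongs to `E` and is nearest to `u`. -/
def IsMetricProj {n : ℕ} (E : Set (EuclideanSpace ℝ (Fin n)))
    (u y : EuclideanSpace ℝ (Fin n)) : Prop :=
  y ∈ E ∧ ∀ x ∈ E, ‖u - y‖ ≤ ‖u - x‖

theorem subset_polar_of_orthogonal_projections
(n : ℕ) (E F : Set (EuclideanSpace ℝ (Fin n)))
    (hEne : E.Nonempty) (hEcl : IsClosed E) (hEconv : Convex ℝ E)
    (hFne : F.Nonempty) (hFcl : IsClosed F) (hFconv : Convex ℝ F)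
    (hsum : E + F = Set.univ)
    (horth : ∀ u y z : EuclideanSpace ℝ (Fin n),
      IsMetricProj E u y → IsMetricProj F u z → ⟪y, z⟫ = 0) :
    E ⊆ polarSet F ∧ F ⊆ polarSet E := by
  -- existence of metric projections on nonempty closed convex sets
  have exproj : ∀ (S : Set (EuclideanSpace ℝ (Fin n))), S.Nonempty → IsClosed S → Convex ℝ S →
      ∀ u, ∃ y, IsMetricProj S u y := by
    intro S hne hcl hconv u
    obtain ⟨v, hvS, hv⟩ := exists_norm_eq_iInf_of_complete_convex hne hcl.isComplete hconv u
    refine ⟨v, hvS, fun x hx => ?_⟩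
    rw [hv]
    exact ciInf_le ⟨0, Set.forall_mem_range.2 fun _ => norm_nonneg _⟩ (⟨x, hx⟩ : S)
  have main : ∀ e ∈ E, ∀ f ∈ F, ⟪e, f⟫ ≤ 0 := by
    intro e he f hf
    obtain ⟨y, hyE, hy⟩ := exproj E hEne hEcl hEconv (e + f)
    obtain ⟨z, hzF, hz⟩ := exproj F hFne hFcl hFconv (e + f)
    have hyz : ⟪y, z⟫ = 0 := horth (e + f) y z ⟨hyE, hy⟩ ⟨hzF, hz⟩
    have h1 : ‖e + f - y‖ ≤ ‖f‖ := by simpa using hy e he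
    have h2 : ‖e + f - z‖ ≤ ‖e‖ := by simpa using hz f hf
    have e1 : ‖e + f - y‖ ^ 2 ≤ ‖f‖ ^ 2 := by
      have := pow_le_pow_left₀ (norm_nonneg _) h1 2
      simpa using this
    have e2 : ‖e + f - z‖ ^ 2 ≤ ‖e‖ ^ 2 := by
      have := pow_le_pow_left₀ (norm_nonneg _) h2 2
      simpa using this
    have e3 : (0 : ℝ) ≤ ‖e + f - y - z‖ ^ 2 := sq_nonneg _
    rw [← real_inner_self_eq_norm_sq, ← real_inner_self_eq_norm_sq] at e1 e2
    rw [← real_inner_self_eq_norm_sq] at e3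
    simp only [inner_sub_left, inner_sub_right, inner_add_left, inner_add_right] at e1 e2 e3
    have c1 : ⟪f, e⟫ = ⟪e, f⟫ := real_inner_comm _ _
    have c2 : ⟪y, e⟫ = ⟪e, y⟫ := real_inner_comm _ _
    have c3 : ⟪y, f⟫ = ⟪f, y⟫ := real_inner_comm _ _
    have c4 : ⟪z, e⟫ = ⟪e, z⟫ := real_inner_comm _ _
    have c5 : ⟪z, f⟫ = ⟪f, z⟫ := real_inner_comm _ _
    have c6 : ⟪z, y⟫ = ⟪y, z⟫ := real_inner_comm _ _
    linarith
  constructor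
  · intro e he f hf
    exact main e he f hf
  · intro f hf e he
    rw [real_inner_comm]
    exact main e he f hf
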